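/- Let E be a real inner product space and define h : E → ℝ by h(x) := (1/4)‖x‖⁴ + (1/2)‖x‖². Then h is twice differentiable, and for all x, a ∈ E the quadratic form of the second derivative satisfies ⟨a, ∇²h(x) a⟩ = 2⟨a, x⟩² + ‖x‖²‖a‖² + ‖a‖², and hence ⟨a, ∇²h(x) a⟩ ≤ 3‖x‖²‖a‖² + ‖a‖². -/

import Mathlib

open RealInnerProductSpace

/-- The quartic kernel `h(x) = (1/4)‖x‖⁴ + (1/2)‖x‖²` is twice differentiable:
there is a gradient map `h'` and a second derivative (Hessian) map `H` such that
for all `x, a ∈ E` the quadratic form satisfies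
`⟪a, ∇²h(x) a⟫ = 2⟪a, x⟫² + ‖x‖²‖a‖² + ‖a‖²`, and hence
`⟪a, ∇²h(x) a⟫ ≤ 3⟪x‖²‖a‖² + ‖a‖²`. -/
theorem quartic_kernel_hessian
    {E : Type*} [NormedAddCommGroup E] [InnerProductSpace ℝ E] :
    ∃ (h' : E → E) (H : E → E →L[ℝ] E),
      (∀ x : E, HasFDerivAt (fun z : E => (1 / 4) * ‖z‖ ^ 4 + (1 / 2) * ‖z‖ ^ 2)
        (innerSL ℝ (h' x)) x) ∧
      (∀ x : E, HasFDerivAt h' (H x) x) ∧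
      (∀ x a : E, ⟪a, H x a⟫ = 2 * ⟪a, x⟫ ^ 2 + ‖x‖ ^ 2 * ‖a‖ ^ 2 + ‖a‖ ^ 2) ∧
      (∀ x a : E, ⟪a, H x a⟫ ≤ 3 * ‖x‖ ^ 2 * ‖a‖ ^ 2 + ‖a‖ ^ 2) := by
  refine ⟨fun x => (‖x‖ ^ 2 + 1) • x,
    fun x => (2 • (innerSL ℝ x)).smulRight x + (‖x‖ ^ 2 + 1) • ContinuousLinearMap.id ℝ E,
    ?_, ?_, ?_, ?_⟩
  · intro x
    have h1 : HasFDerivAt (fun z : E => ‖z‖ ^ 2) (2 • (innerSL ℝ x)) x :=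
      (hasStrictFDerivAt_norm_sq x).hasFDerivAt
    have h2 : HasFDerivAt (fun z : E => (1 / 4) * ‖z‖ ^ 4 + (1 / 2) * ‖z‖ ^ 2)
        ((1 / 4 : ℝ) • ((2 * ‖x‖ ^ 2) • (2 • innerSL ℝ x)) + (1 / 2 : ℝ) • (2 • innerSL ℝ x)) x := by
      have h4 : HasFDerivAt (fun z : E => ‖z‖ ^ 4)
          ((2 * ‖x‖ ^ 2) • (2 • innerSL ℝ x)) x := by
        have := (hasDerivAt_pow 2 (‖x‖ ^ 2)).comp_hasFDerivAt x h1
        simpa [Function.comp_def, ← pow_mul, mul_comm] using this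
      exact (h4.const_mul _).add (h1.const_mul _)
    convert h2 using 1
    ext a
    simp [inner_add_left, inner_smul_left, real_inner_comm]
    ring
  · intro x
    have h1 : HasFDerivAt (fun z : E => ‖z‖ ^ 2 + 1) (2 • (innerSL ℝ x)) x := by
      simpa using ((hasStrictFDerivAt_norm_sq x).hasFDerivAt.add_const 1)
    have := h1.smul (hasFDerivAt_id x)
    convert this using 1
    ext a
    simp [two_smul]
    abel
    exact add_comm _ _
  · intro x a
    simp [inner_add_right, inner_smul_right, real_inner_comm, real_inner_self_eq_norm_sq, two_smul]
    ring
  · intro x a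
    have key : ⟪a, x⟫ ^ 2 ≤ ‖x‖ ^ 2 * ‖a‖ ^ 2 := by
      have := real_inner_mul_inner_self_le a x
      simp only [real_inner_self_eq_norm_sq] at this
      nlinarith [this]
    have heq : ⟪a, ((2 • (innerSL ℝ x)).smulRight x + (‖x‖ ^ 2 + 1) • ContinuousLinearMap.id ℝ E) a⟫
        = 2 * ⟪a, x⟫ ^ 2 + ‖x‖ ^ 2 * ‖a‖ ^ 2 + ‖a‖ ^ 2 := by
      simp [inner_add_right, inner_smul_right, real_inner_comm, real_inner_self_eq_norm_sq, two_smul]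
      ring
    rw [heq]
    nlinarith
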